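/- For every topological space X, n ∈ ℕ, and α ∈ H_n(X;ℝ), and every cycle c representing α, there exists a normalised cycle c' representing α with ‖c'‖₁ ≤ ‖c‖₁. -/

import Mathlib

open Finset

noncomputable section SingularChains

/-- The affine map `Δ^k → Δ^n` extending the vertex map `π`. -/
def affMap {k n : ℕ} (π : Fin (k + 1) → Fin (n + 1)) :
    C(stdSimplex ℝ (Fin (k + 1)), stdSimplex ℝ (Fin (n + 1))) where
  toFun x := ⟨fun i => ∑ l ∈ Finset.univ.filter (fun l => π l = i), (x : Fin (k + 1) → ℝ) l, by
    constructor
    · intro i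
      exact Finset.sum_nonneg fun l _ => x.2.1 l
    · rw [← x.2.2]
      exact Finset.sum_fiberwise _ _ _⟩
  continuous_toFun := by
    apply Continuous.subtype_mk
    exact continuous_pi fun i =>
      continuous_finset_sum _ fun l _ => (continuous_apply l).comp continuous_subtype_val

variable {X : Type} [TopologicalSpace X]

/-- Singular `n`-simplices in `X`. -/
abbrev Sing (n : ℕ) (X : Type) [TopologicalSpace X] := C(stdSimplex ℝ (Fin (n + 1)), X)

/-- Singular `n`-chains with real coefficients. -/
abbrev Chain (n : ℕ) (X : Type) [TopologicalSpace X] := Sing n X →₀ ℝ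

/-- The `j`-th face map `∂ⱼ : C_{n+1}(X;ℝ) → C_n(X;ℝ)`. -/
def face {n : ℕ} (j : Fin (n + 2)) : Chain (n + 1) X →ₗ[ℝ] Chain n X :=
  Finsupp.lmapDomain ℝ ℝ fun σ => σ.comp (affMap (Fin.succAbove j))

/-- The singular boundary operator `∂ = Σⱼ (-1)ʲ ∂ⱼ`. -/
def bdry (n : ℕ) : Chain (n + 1) X →ₗ[ℝ] Chain n X :=
  ∑ j : Fin (n + 2), ((-1 : ℝ) ^ (j : ℕ)) • face j

/-- The symmetrisation of a singular simplex. -/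
def symSimplex {n : ℕ} (σ : Sing n X) : Chain n X :=
  (((n + 1).factorial : ℝ))⁻¹ •
    ∑ π : Equiv.Perm (Fin (n + 1)),
      ((Equiv.Perm.sign π : ℤ) : ℝ) • Finsupp.single (σ.comp (affMap π)) (1 : ℝ)

/-- The symmetrisation map `sym_n : C_n(X;ℝ) → C_n(X;ℝ)`. -/
def symCh (n : ℕ) : Chain n X →ₗ[ℝ] Chain n X :=
  Finsupp.lsum ℝ fun σ => LinearMap.toSpanSingleton ℝ _ (symSimplex σ)

/-- The ℓ¹-norm of a singular chain. -/
def l1 {n : ℕ} (c : Chain n X) : ℝ := ∑ σ ∈ c.support, |c σ|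

/-- Cycles. -/
def cyc (X : Type) [TopologicalSpace X] : (n : ℕ) → Submodule ℝ (Chain n X)
  | 0 => ⊤
  | n + 1 => LinearMap.ker (bdry n)

/-- Boundaries. -/
def bdries (X : Type) [TopologicalSpace X] (n : ℕ) : Submodule ℝ (Chain n X) :=
  LinearMap.range (bdry n)

/-- A chain is normalised if all but the last face map vanish on it. -/
def IsNormalised : {n : ℕ} → Chain n X → Prop
  | 0, _ => True
  | n + 1, c => ∀ j : Fin (n + 2), j ≠ Fin.last (n + 1) → face j c = 0

/-- The cyclic permutation `τⱼ = (j j-1 ⋯ 1 0)`. -/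
def tau (n : ℕ) (j : Fin (n + 1)) : Equiv.Perm (Fin (n + 1)) := (Fin.cycleRange j)⁻¹

end SingularChains

noncomputable section AuxProof

open Finsupp Equiv

variable {X : Type} [TopologicalSpace X]

theorem affMap_comp {k l n : ℕ} (f : Fin (l + 1) → Fin (n + 1)) (g : Fin (k + 1) → Fin (l + 1)) :
    (affMap f).comp (affMap g) = affMap (f ∘ g) := by
  ext x i
  change ∑ l₁ ∈ Finset.univ.filter (fun l₁ => f l₁ = i),
      (∑ l ∈ Finset.univ.filter (fun l => g l = l₁), (x : Fin (k + 1) → ℝ) l) =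
    ∑ l ∈ Finset.univ.filter (fun l => (f ∘ g) l = i), (x : Fin (k + 1) → ℝ) l
  rw [Finset.sum_fiberwise_eq_sum_filter]
  apply Finset.sum_congr
  · apply Finset.filter_congr
    intro b _
    simp
  · intros; rfl

theorem affMap_id {n : ℕ} : affMap (id : Fin (n + 1) → Fin (n + 1)) = ContinuousMap.id _ := by
  ext x i
  change ∑ l ∈ Finset.univ.filter (fun l => l = i), (x : Fin (n + 1) → ℝ) l = (x : Fin (n + 1) → ℝ) i
  rw [show (Finset.univ.filter (fun l => l = i)) = {i} by ext; simp]
  simp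

theorem comp_affMap_assoc {k l n : ℕ} (σ : Sing n X) (f : Fin (l + 1) → Fin (n + 1))
    (g : Fin (k + 1) → Fin (l + 1)) :
    (σ.comp (affMap f)).comp (affMap g) = σ.comp (affMap (f ∘ g)) := by
  rw [← affMap_comp, ← ContinuousMap.comp_assoc]

/-- Model chains: degree-`k` affine chains on the model simplex with `m + 1` vertices. -/
abbrev Mdl (k m : ℕ) : Type := (Fin (k + 1) → Fin (m + 1)) →₀ ℝ

def evalM {m : ℕ} (σ : Sing m X) (k : ℕ) : Mdl k m →ₗ[ℝ] Chain k X :=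
  Finsupp.lmapDomain ℝ ℝ fun f => σ.comp (affMap f)

def pushM {k m m' : ℕ} (g : Fin (m + 1) → Fin (m' + 1)) : Mdl k m →ₗ[ℝ] Mdl k m' :=
  Finsupp.lmapDomain ℝ ℝ fun f => g ∘ f

def faceM {k m : ℕ} (j : Fin (k + 2)) : Mdl (k + 1) m →ₗ[ℝ] Mdl k m :=
  Finsupp.lmapDomain ℝ ℝ fun f => f ∘ Fin.succAbove j

def bdryM (k m : ℕ) : Mdl (k + 1) m →ₗ[ℝ] Mdl k m :=
  ∑ j : Fin (k + 2), ((-1 : ℝ) ^ (j : ℕ)) • faceM j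

def coneM {k m : ℕ} : Mdl k m →ₗ[ℝ] Mdl (k + 1) m :=
  Finsupp.lmapDomain ℝ ℝ fun f => Fin.cons 0 f

@[simp] lemma evalM_single {m k : ℕ} (σ : Sing m X) (f : Fin (k + 1) → Fin (m + 1)) (r : ℝ) :
    evalM σ k (Finsupp.single f r) = Finsupp.single (σ.comp (affMap f)) r := by
  simp [evalM, Finsupp.lmapDomain_apply, Finsupp.mapDomain_single]

@[simp] lemma mapM_single {k m m' : ℕ} (g : Fin (m + 1) → Fin (m' + 1))
    (f : Fin (k + 1) → Fin (m + 1)) (r : ℝ) :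
    pushM (k := k) g (Finsupp.single f r) = Finsupp.single (g ∘ f) r := by
  unfold pushM
  simp [Finsupp.lmapDomain_apply, Finsupp.mapDomain_single]

@[simp] lemma faceM_single {k m : ℕ} (j : Fin (k + 2)) (f : Fin (k + 2) → Fin (m + 1)) (r : ℝ) :
    faceM j (Finsupp.single f r) = Finsupp.single (f ∘ Fin.succAbove j) r := by
  simp [faceM, Finsupp.lmapDomain_apply, Finsupp.mapDomain_single]

@[simp] lemma coneM_single {k m : ℕ} (f : Fin (k + 1) → Fin (m + 1)) (r : ℝ) :
    coneM (Finsupp.single f r) = Finsupp.single (Fin.cons 0 f) r := by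
  simp [coneM, Finsupp.lmapDomain_apply, Finsupp.mapDomain_single]

@[simp] lemma face_single {n : ℕ} (j : Fin (n + 2)) (σ : Sing (n + 1) X) (r : ℝ) :
    face j (Finsupp.single σ r) = Finsupp.single (σ.comp (affMap (Fin.succAbove j))) r := by
  simp [face, Finsupp.lmapDomain_apply, Finsupp.mapDomain_single]

end AuxProof
noncomputable section AuxProof2

open Finsupp Equiv

variable {X : Type} [TopologicalSpace X]

lemma bdry_apply {n : ℕ} (c : Chain (n + 1) X) :
    bdry n c = ∑ j : Fin (n + 2), ((-1 : ℝ) ^ (j : ℕ)) • face j c := by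
  simp [bdry, LinearMap.sum_apply, LinearMap.smul_apply]

lemma bdryM_apply {k m : ℕ} (z : Mdl (k + 1) m) :
    bdryM k m z = ∑ j : Fin (k + 2), ((-1 : ℝ) ^ (j : ℕ)) • faceM j z := by
  simp [bdryM, LinearMap.sum_apply, LinearMap.smul_apply]

lemma face_evalM {m k : ℕ} (σ : Sing m X) (j : Fin (k + 2)) (z : Mdl (k + 1) m) :
    face j (evalM σ (k + 1) z) = evalM σ k (faceM j z) := by
  have h : (face j).comp (evalM σ (k + 1)) = (evalM σ k).comp (faceM j) := by
    apply Finsupp.lhom_ext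
    intro f r
    simp [LinearMap.comp_apply, comp_affMap_assoc, affMap_comp]
  exact DFunLike.congr_fun h z

lemma bdry_evalM {m k : ℕ} (σ : Sing m X) (z : Mdl (k + 1) m) :
    bdry k (evalM σ (k + 1) z) = evalM σ k (bdryM k m z) := by
  rw [bdry_apply, bdryM_apply, map_sum]
  exact Finset.sum_congr rfl fun j _ => by rw [face_evalM, map_smul]

lemma evalM_pushM {k m m' : ℕ} (σ : Sing m' X) (g : Fin (m + 1) → Fin (m' + 1))
    (z : Mdl k m) :
    evalM σ k (pushM g z) = evalM (σ.comp (affMap g)) k z := by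
  have h : (evalM σ k).comp (pushM (k := k) g) = evalM (σ.comp (affMap g)) k := by
    apply Finsupp.lhom_ext
    intro f r
    simp [LinearMap.comp_apply, comp_affMap_assoc, affMap_comp]
  exact DFunLike.congr_fun h z

lemma pushM_faceM {k m m' : ℕ} (g : Fin (m + 1) → Fin (m' + 1)) (j : Fin (k + 2))
    (z : Mdl (k + 1) m) :
    pushM g (faceM j z) = faceM j (pushM g z) := by
  have h : (pushM (k := k) g).comp (faceM j) = (faceM j).comp (pushM (k := k + 1) g) := by
    apply Finsupp.lhom_ext
    intro f r
    simp [LinearMap.comp_apply, Function.comp_assoc]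
  exact DFunLike.congr_fun h z

lemma pushM_bdryM {k m m' : ℕ} (g : Fin (m + 1) → Fin (m' + 1)) (z : Mdl (k + 1) m) :
    pushM g (bdryM k m z) = bdryM k m' (pushM g z) := by
  rw [bdryM_apply, bdryM_apply, map_sum]
  exact Finset.sum_congr rfl fun j _ => by rw [map_smul, pushM_faceM]

lemma faceM_zero_coneM {k m : ℕ} (z : Mdl k m) :
    faceM (0 : Fin (k + 2)) (coneM z) = z := by
  have h : (faceM (0 : Fin (k + 2))).comp (coneM (k := k) (m := m)) = LinearMap.id := by
    apply Finsupp.lhom_ext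
    intro f r
    have : Fin.cons (0 : Fin (m + 1)) f ∘ Fin.succ = f := by
      funext l
      simp
    simp [LinearMap.comp_apply, this]
  exact DFunLike.congr_fun h z

lemma faceM_succ_coneM {k m : ℕ} (j : Fin (k + 2)) (z : Mdl (k + 1) m) :
    faceM j.succ (coneM z) = coneM (faceM j z) := by
  have h : (faceM j.succ).comp (coneM (k := k + 1) (m := m)) =
      (coneM (k := k)).comp (faceM j) := by
    apply Finsupp.lhom_ext
    intro f r
    have : Fin.cons (0 : Fin (m + 1)) f ∘ Fin.succAbove j.succ =
        Fin.cons (0 : Fin (m + 1)) (f ∘ Fin.succAbove j) := by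
      funext l
      induction l using Fin.cases with
      | zero => simp [Fin.succ_succAbove_zero]
      | succ i => simp [Fin.succ_succAbove_succ]
    simp [LinearMap.comp_apply, this]
  exact DFunLike.congr_fun h z

lemma bdryM_coneM {k m : ℕ} (z : Mdl (k + 1) m) :
    bdryM (k + 1) m (coneM z) = z - coneM (bdryM k m z) := by
  rw [bdryM_apply, Fin.sum_univ_succ]
  simp only [Fin.val_zero, pow_zero, one_smul, faceM_zero_coneM, Fin.val_succ, faceM_succ_coneM]
  rw [bdryM_apply, map_sum, sub_eq_add_neg, ← Finset.sum_neg_distrib]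
  congr 1
  apply Finset.sum_congr rfl
  intro i _
  rw [map_smul, pow_succ, mul_comm, neg_one_mul, neg_smul]

/-- The (unnormalised) model symmetrisation chain. -/
def SmdlRaw (m : ℕ) : Mdl m m :=
  ∑ π : Equiv.Perm (Fin (m + 1)),
    ((Equiv.Perm.sign π : ℤ) : ℝ) • Finsupp.single (⇑π) (1 : ℝ)

/-- The model symmetrisation chain. -/
def Smdl (m : ℕ) : Mdl m m := (((m + 1).factorial : ℝ))⁻¹ • SmdlRaw m

/-- The model fundamental chain. -/
def idM (m : ℕ) : Mdl m m := Finsupp.single id 1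

lemma evalM_Smdl {m : ℕ} (σ : Sing m X) : evalM σ m (Smdl m) = symSimplex σ := by
  simp [Smdl, SmdlRaw, symSimplex, map_smul, map_sum]

lemma evalM_idM {m : ℕ} (σ : Sing m X) : evalM σ m (idM m) = Finsupp.single σ 1 := by
  have : σ.comp (affMap (id : Fin (m + 1) → Fin (m + 1))) = σ := by
    rw [affMap_id, ContinuousMap.comp_id]
  simp [idM, this]

lemma Smdl_zero : Smdl 0 = idM 0 := by
  rw [Smdl, SmdlRaw, Fintype.sum_subsingleton _ (1 : Equiv.Perm (Fin 1))]
  simp [idM, Nat.factorial]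

end AuxProof2
noncomputable section AuxProof3

open Finsupp Equiv

lemma sign_tau {m : ℕ} (j : Fin (m + 1)) :
    Equiv.Perm.sign (tau m j) = (-1) ^ (j : ℕ) := by
  rw [tau, map_inv, Fin.sign_cycleRange]
  simp

lemma tau_succ {m : ℕ} (j : Fin (m + 1)) (l : Fin m) :
    tau m j l.succ = j.succAbove l := by
  rw [tau]
  exact Fin.cycleRange_symm_succ j l

lemma tau_zero_apply {m : ℕ} (j : Fin (m + 1)) : tau m j 0 = j := by
  rw [tau]
  exact Fin.cycleRange_symm_zero j

lemma key_comp {m : ℕ} (π : Equiv.Perm (Fin (m + 2))) (j : Fin (m + 2)) :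
    ⇑(π * tau (m + 1) j) ∘ Fin.succAbove (0 : Fin (m + 2)) = ⇑π ∘ Fin.succAbove j := by
  funext l
  simp only [Function.comp_apply, Fin.zero_succAbove, Equiv.Perm.mul_apply, tau_succ]

lemma sign_cast_mul_tau {m : ℕ} (π : Equiv.Perm (Fin (m + 2))) (j : Fin (m + 2)) :
    ((Equiv.Perm.sign (π * tau (m + 1) j) : ℤ) : ℝ) =
      ((-1 : ℝ) ^ (j : ℕ)) * ((Equiv.Perm.sign π : ℤ) : ℝ) := by
  rw [map_mul, sign_tau]
  push_cast
  ring

lemma expand_faceM_SmdlRaw {m : ℕ} (i : Fin (m + 2)) :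
    faceM i (SmdlRaw (m + 1)) =
      ∑ π : Equiv.Perm (Fin (m + 2)),
        ((Equiv.Perm.sign π : ℤ) : ℝ) • Finsupp.single (⇑π ∘ Fin.succAbove i) (1 : ℝ) := by
  rw [SmdlRaw, map_sum]
  exact Finset.sum_congr rfl fun π _ => by rw [map_smul, faceM_single]

lemma faceM_zero_SmdlRaw {m : ℕ} (j : Fin (m + 2)) :
    faceM (0 : Fin (m + 2)) (SmdlRaw (m + 1)) =
      ((-1 : ℝ) ^ (j : ℕ)) • faceM j (SmdlRaw (m + 1)) := by
  rw [expand_faceM_SmdlRaw, expand_faceM_SmdlRaw, Finset.smul_sum]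
  rw [← Equiv.sum_comp (Equiv.mulRight (tau (m + 1) j))
    (fun π => ((Equiv.Perm.sign π : ℤ) : ℝ) •
      Finsupp.single (⇑π ∘ Fin.succAbove (0 : Fin (m + 2))) (1 : ℝ))]
  apply Finset.sum_congr rfl
  intro π _
  show ((Equiv.Perm.sign (π * tau (m + 1) j) : ℤ) : ℝ) •
      Finsupp.single (⇑(π * tau (m + 1) j) ∘ Fin.succAbove (0 : Fin (m + 2))) (1 : ℝ) = _
  rw [key_comp, sign_cast_mul_tau, ← smul_smul]

lemma faceM_SmdlRaw {m : ℕ} (j : Fin (m + 2)) :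
    faceM j (SmdlRaw (m + 1)) =
      ((-1 : ℝ) ^ (j : ℕ)) • faceM (0 : Fin (m + 2)) (SmdlRaw (m + 1)) := by
  rw [faceM_zero_SmdlRaw j, smul_smul, ← pow_add, Even.neg_one_pow ⟨(j : ℕ), rfl⟩, one_smul]

lemma faceM_zero_SmdlRaw_decomp {m : ℕ} :
    faceM (0 : Fin (m + 2)) (SmdlRaw (m + 1)) =
      ∑ j : Fin (m + 2), ((-1 : ℝ) ^ (j : ℕ)) • pushM (Fin.succAbove j) (SmdlRaw m) := by
  have rhs : ∀ j : Fin (m + 2),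
      ((-1 : ℝ) ^ (j : ℕ)) • pushM (k := m) (Fin.succAbove j) (SmdlRaw m) =
      ∑ ρ : Equiv.Perm (Fin (m + 1)),
        (((-1 : ℝ) ^ (j : ℕ)) * ((Equiv.Perm.sign ρ : ℤ) : ℝ)) •
          Finsupp.single (Fin.succAbove j ∘ ⇑ρ) (1 : ℝ) := by
    intro j
    rw [SmdlRaw, map_sum, Finset.smul_sum]
    exact Finset.sum_congr rfl fun ρ _ => by rw [map_smul, mapM_single, smul_smul]
  rw [expand_faceM_SmdlRaw]
  simp_rw [rhs]
  set φ : Fin (m + 2) × Equiv.Perm (Fin (m + 1)) → Equiv.Perm (Fin (m + 2)) :=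
    fun p => tau (m + 1) p.1 * Equiv.Perm.decomposeFin.symm (0, p.2) with hφ
  have hinj : Function.Injective φ := by
    rintro ⟨j, ρ⟩ ⟨j', ρ'⟩ h
    have h0 : j = j' := by
      have := congrArg (fun π => π (0 : Fin (m + 2))) h
      simpa [hφ, Equiv.Perm.mul_apply, tau_zero_apply] using this
    subst h0
    have h1 : Equiv.Perm.decomposeFin.symm (0, ρ) = Equiv.Perm.decomposeFin.symm (0, ρ') :=
      mul_left_cancel h
    have h2 := Equiv.Perm.decomposeFin.symm.injective h1
    simp only [Prod.mk.injEq] at h2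
    exact Prod.ext rfl h2.2
  have hbij : Function.Bijective φ := by
    rw [Fintype.bijective_iff_injective_and_card]
    refine ⟨hinj, ?_⟩
    simp [Fintype.card_perm, Nat.factorial_succ]
  have hcompat : ∀ p : Fin (m + 2) × Equiv.Perm (Fin (m + 1)),
      (((-1 : ℝ) ^ ((p.1 : Fin (m + 2)) : ℕ)) * ((Equiv.Perm.sign p.2 : ℤ) : ℝ)) •
        Finsupp.single (Fin.succAbove p.1 ∘ ⇑p.2) (1 : ℝ) =
      ((Equiv.Perm.sign (φ p) : ℤ) : ℝ) •
        Finsupp.single (⇑(φ p) ∘ Fin.succAbove (0 : Fin (m + 2))) (1 : ℝ) := by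
    rintro ⟨j, ρ⟩
    have hfun : ⇑(φ (j, ρ)) ∘ Fin.succAbove (0 : Fin (m + 2)) = Fin.succAbove j ∘ ⇑ρ := by
      funext l
      simp only [hφ, Function.comp_apply, Fin.zero_succAbove, Equiv.Perm.mul_apply,
        Equiv.Perm.decomposeFin_symm_apply_succ, Equiv.swap_self, Equiv.refl_apply, tau_succ]
    have hsgn : ((Equiv.Perm.sign (φ (j, ρ)) : ℤ) : ℝ) =
        ((-1 : ℝ) ^ (j : ℕ)) * ((Equiv.Perm.sign ρ : ℤ) : ℝ) := by
      simp only [hφ, map_mul, sign_tau, Equiv.Perm.decomposeFin.symm_sign, if_pos rfl, one_mul]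
      push_cast
      ring
    rw [hsgn, hfun]
  calc (∑ π : Equiv.Perm (Fin (m + 2)),
        ((Equiv.Perm.sign π : ℤ) : ℝ) •
          Finsupp.single (⇑π ∘ Fin.succAbove (0 : Fin (m + 2))) (1 : ℝ))
      = ∑ p : Fin (m + 2) × Equiv.Perm (Fin (m + 1)),
          (((-1 : ℝ) ^ ((p.1 : Fin (m + 2)) : ℕ)) * ((Equiv.Perm.sign p.2 : ℤ) : ℝ)) •
            Finsupp.single (Fin.succAbove p.1 ∘ ⇑p.2) (1 : ℝ) :=
        (Fintype.sum_bijective φ hbij _ _ hcompat).symm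
    _ = _ := Fintype.sum_prod_type _

lemma bdryM_Smdl {m : ℕ} :
    bdryM m (m + 1) (Smdl (m + 1)) =
      ∑ j : Fin (m + 2), ((-1 : ℝ) ^ (j : ℕ)) • pushM (Fin.succAbove j) (Smdl m) := by
  have h1 : ∀ j : Fin (m + 2), ((-1 : ℝ) ^ (j : ℕ)) • faceM j (Smdl (m + 1)) =
      (((m + 1 + 1).factorial : ℝ))⁻¹ • faceM (0 : Fin (m + 2)) (SmdlRaw (m + 1)) := by
    intro j
    rw [Smdl, map_smul, faceM_SmdlRaw j, smul_smul, smul_smul]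
    congr 1
    have hone : ((-1 : ℝ) ^ (j : ℕ)) * ((-1 : ℝ) ^ (j : ℕ)) = 1 := by
      rw [← pow_add]; exact Even.neg_one_pow ⟨(j : ℕ), rfl⟩
    have hc : ∀ c : ℝ, (-1 : ℝ) ^ (j : ℕ) * c * (-1) ^ (j : ℕ) =
        ((-1 : ℝ) ^ (j : ℕ) * (-1) ^ (j : ℕ)) * c := fun c => by ring
    rw [hc, hone, one_mul]
  rw [bdryM_apply, Finset.sum_congr rfl (fun j _ => h1 j), Finset.sum_const, Finset.card_univ,
    Fintype.card_fin, ← Nat.cast_smul_eq_nsmul ℝ, smul_smul]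
  have hsc : ((m + 2 : ℕ) : ℝ) * (((m + 1 + 1).factorial : ℝ))⁻¹ =
      (((m + 1).factorial : ℝ))⁻¹ := by
    have h2 : ((m + 1 + 1).factorial : ℝ) = ((m + 2 : ℕ) : ℝ) * ((m + 1).factorial : ℝ) := by
      rw [Nat.factorial_succ]; push_cast; ring
    rw [h2, mul_inv, ← mul_assoc, mul_inv_cancel₀ (by positivity), one_mul]
  rw [hsc]
  have hR : ∀ j : Fin (m + 2), ((-1 : ℝ) ^ (j : ℕ)) • pushM (k := m) (Fin.succAbove j) (Smdl m) =
      (((m + 1).factorial : ℝ))⁻¹ •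
        (((-1 : ℝ) ^ (j : ℕ)) • pushM (k := m) (Fin.succAbove j) (SmdlRaw m)) := by
    intro j
    rw [Smdl, map_smul, smul_smul, smul_smul, mul_comm]
  rw [Finset.sum_congr rfl (fun j _ => hR j), ← Finset.smul_sum, ← faceM_zero_SmdlRaw_decomp]

lemma bdryM_idM {m : ℕ} :
    bdryM m (m + 1) (idM (m + 1)) =
      ∑ j : Fin (m + 2), ((-1 : ℝ) ^ (j : ℕ)) • pushM (Fin.succAbove j) (idM m) := by
  simp only [idM]
  rw [bdryM_apply]
  refine Finset.sum_congr rfl fun j _ => ?_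
  rw [faceM_single, mapM_single]
  simp

end AuxProof3
noncomputable section AuxProof4

open Finsupp Equiv

lemma val_succAbove' {n : ℕ} (p : Fin (n + 1)) (x : Fin n) :
    ((p.succAbove x : Fin (n + 1)) : ℕ) = if (x : ℕ) < (p : ℕ) then (x : ℕ) else (x : ℕ) + 1 := by
  rcases lt_or_ge (Fin.castSucc x) p with h | h
  · have hv : (x : ℕ) < (p : ℕ) := by simpa [Fin.lt_def] using h
    rw [Fin.succAbove_of_castSucc_lt _ _ h, if_pos hv]
    rfl
  · have hv : ¬ (x : ℕ) < (p : ℕ) := by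
      have : (p : ℕ) ≤ (x : ℕ) := by simpa [Fin.le_def] using h
      omega
    rw [Fin.succAbove_of_le_castSucc _ _ h, if_neg hv]
    rfl

lemma succAbove_succAbove_comm {m : ℕ} (a b : Fin (m + 2)) (hab : a ≤ b) (l : Fin (m + 1)) :
    (b.succ).succAbove (a.succAbove l) = (a.castSucc).succAbove (b.succAbove l) := by
  apply Fin.ext
  rw [val_succAbove', val_succAbove', val_succAbove', val_succAbove']
  have h1 : ((b.succ : Fin (m + 3)) : ℕ) = (b : ℕ) + 1 := rfl
  have h2 : ((a.castSucc : Fin (m + 3)) : ℕ) = (a : ℕ) := rfl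
  have h3 : ((a : ℕ)) ≤ (b : ℕ) := hab
  rw [h1, h2]
  split_ifs <;> omega

lemma pushM_pushM {d m m' m'' : ℕ} (g : Fin (m' + 1) → Fin (m'' + 1))
    (g' : Fin (m + 1) → Fin (m' + 1)) (w : Mdl d m) :
    pushM g (pushM g' w) = pushM (g ∘ g') w := by
  have h : (pushM (k := d) g).comp (pushM (k := d) g') = pushM (k := d) (g ∘ g') := by
    apply Finsupp.lhom_ext
    intro f r
    simp [LinearMap.comp_apply, Function.comp_assoc]
  exact DFunLike.congr_fun h w

set_option maxHeartbeats 1600000 in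
lemma double_sum_zero {d m : ℕ} (w : Mdl d m) :
    ∑ p : Fin (m + 3) × Fin (m + 2), ((-1 : ℝ) ^ ((p.1 : ℕ) + (p.2 : ℕ))) •
      pushM (Fin.succAbove p.1) (pushM (Fin.succAbove p.2) w) = 0 := by
  set g : Fin (m + 3) × Fin (m + 2) → Fin (m + 3) × Fin (m + 2) := fun p =>
    if h : (p.2 : ℕ) < (p.1 : ℕ) then
      (⟨(p.2 : ℕ), by have := p.2.isLt; omega⟩, ⟨(p.1 : ℕ) - 1, by have := p.1.isLt; omega⟩)
    else
      (⟨(p.2 : ℕ) + 1, by have := p.2.isLt; omega⟩, ⟨(p.1 : ℕ), by have := p.2.isLt; omega⟩)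
    with hg
  have cancel2 : ∀ (e1 e2 : ℕ) (u1 u2 : Fin (m + 3)) (v1 v2 : Fin (m + 2)),
      e1 = e2 + 1 →
      (Fin.succAbove u1 ∘ Fin.succAbove v1) = (Fin.succAbove u2 ∘ Fin.succAbove v2) →
      ((-1 : ℝ) ^ e1) • pushM (Fin.succAbove u1) (pushM (Fin.succAbove v1) w) +
        ((-1 : ℝ) ^ e2) • pushM (Fin.succAbove u2) (pushM (Fin.succAbove v2) w) = 0 := by
    rintro _ e2 u1 u2 v1 v2 rfl hfun
    rw [pushM_pushM, pushM_pushM, hfun, pow_succ, mul_neg_one, neg_smul, neg_add_cancel]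
  have cancel2' : ∀ (e1 e2 : ℕ) (u1 u2 : Fin (m + 3)) (v1 v2 : Fin (m + 2)),
      e2 = e1 + 1 →
      (Fin.succAbove u2 ∘ Fin.succAbove v2) = (Fin.succAbove u1 ∘ Fin.succAbove v1) →
      ((-1 : ℝ) ^ e1) • pushM (Fin.succAbove u1) (pushM (Fin.succAbove v1) w) +
        ((-1 : ℝ) ^ e2) • pushM (Fin.succAbove u2) (pushM (Fin.succAbove v2) w) = 0 := by
    rintro e1 _ u1 u2 v1 v2 rfl hfun
    rw [pushM_pushM, pushM_pushM, hfun, pow_succ, mul_neg_one, neg_smul, add_neg_cancel]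
  apply Finset.sum_ninvolution g
  · rintro ⟨j, i⟩
    dsimp only
    by_cases h : (i : ℕ) < (j : ℕ)
    · simp only [hg, dif_pos h]
      refine cancel2 _ _ _ _ _ _ (by try simp only [Fin.val_mk]
                                     omega) ?_
      funext l
      apply Fin.ext
      simp only [Function.comp_apply, val_succAbove', Fin.val_mk]
      split_ifs <;> omega
    · simp only [hg, dif_neg h]
      refine cancel2' _ _ _ _ _ _ (by try simp only [Fin.val_mk]
                                      omega) ?_
      funext l
      apply Fin.ext
      simp only [Function.comp_apply, val_succAbove', Fin.val_mk]
      split_ifs <;> omega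
  · rintro ⟨j, i⟩ _
    intro hgp
    by_cases h : (i : ℕ) < (j : ℕ)
    · have := congrArg (fun q => ((q.1 : Fin (m + 3)) : ℕ)) hgp
      simp only [hg, dif_pos h, Fin.val_mk] at this
      omega
    · have := congrArg (fun q => ((q.1 : Fin (m + 3)) : ℕ)) hgp
      simp only [hg, dif_neg h, Fin.val_mk] at this
      omega
  · intro p; exact Finset.mem_univ _
  · rintro ⟨j, i⟩
    by_cases h : (i : ℕ) < (j : ℕ)
    · simp only [hg, dif_pos h]
      rw [dif_neg (by try simp only [Fin.val_mk]
                      omega)]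
      refine Prod.ext (Fin.ext ?_) (Fin.ext ?_) <;> simp only [Fin.val_mk] <;> omega
    · simp only [hg, dif_neg h]
      rw [dif_pos (by try simp only [Fin.val_mk]
                      omega)]
      refine Prod.ext (Fin.ext ?_) (Fin.ext ?_) <;> simp only [Fin.val_mk] <;> omega

/-- The model chain homotopy between symmetrisation and the identity. -/
def Hmdl : (k : ℕ) → Mdl (k + 1) k
  | 0 => 0
  | k + 1 => coneM (Smdl (k + 1) - idM (k + 1) -
      ∑ j : Fin (k + 2), ((-1 : ℝ) ^ (j : ℕ)) • pushM (Fin.succAbove j) (Hmdl k))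

/-- The model cycle bounded by `Hmdl`. -/
def Zmdl (k : ℕ) : Mdl (k + 1) (k + 1) :=
  Smdl (k + 1) - idM (k + 1) -
    ∑ j : Fin (k + 2), ((-1 : ℝ) ^ (j : ℕ)) • pushM (Fin.succAbove j) (Hmdl k)

lemma Hmdl_succ (k : ℕ) : Hmdl (k + 1) = coneM (Zmdl k) := rfl

set_option maxHeartbeats 1600000 in
lemma bdry_Zmdl : ∀ k : ℕ, bdryM k (k + 1) (Zmdl k) = 0 := by
  intro k
  induction k with
  | zero =>
    have h0 : Zmdl 0 = Smdl 1 - idM 1 := by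
      rw [Zmdl]
      simp [Hmdl]
    rw [h0, map_sub, bdryM_Smdl (m := 0), bdryM_idM (m := 0), Smdl_zero, sub_self]
  | succ k ih =>
    have hH : bdryM (k + 1) (k + 1) (Hmdl (k + 1)) = Zmdl k := by
      rw [Hmdl_succ, bdryM_coneM, ih, map_zero, sub_zero]
    have hthird : bdryM (k + 1) (k + 2)
        (∑ j : Fin (k + 3), ((-1 : ℝ) ^ (j : ℕ)) • pushM (Fin.succAbove j) (Hmdl (k + 1))) =
        ∑ j : Fin (k + 3), ((-1 : ℝ) ^ (j : ℕ)) • pushM (Fin.succAbove j) (Zmdl k) := by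
      rw [map_sum]
      refine Finset.sum_congr rfl fun j _ => ?_
      rw [map_smul, ← pushM_bdryM, hH]
    have hre : ∀ j : Fin (k + 3), ((-1 : ℝ) ^ (j : ℕ)) • pushM (k := k + 1) (Fin.succAbove j)
        (∑ i : Fin (k + 2), ((-1 : ℝ) ^ (i : ℕ)) • pushM (Fin.succAbove i) (Hmdl k)) =
        ∑ i : Fin (k + 2), ((-1 : ℝ) ^ ((j : ℕ) + (i : ℕ))) •
          pushM (Fin.succAbove j) (pushM (Fin.succAbove i) (Hmdl k)) := by
      intro j
      rw [map_sum, Finset.smul_sum]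
      exact Finset.sum_congr rfl fun i _ => by rw [map_smul, smul_smul, ← pow_add]
    have hprod : (∑ p : Fin (k + 3) × Fin (k + 2),
          ((-1 : ℝ) ^ ((p.1 : ℕ) + (p.2 : ℕ))) •
            pushM (Fin.succAbove p.1) (pushM (Fin.succAbove p.2) (Hmdl k))) =
        ∑ j : Fin (k + 3), ∑ i : Fin (k + 2), ((-1 : ℝ) ^ ((j : ℕ) + (i : ℕ))) •
          pushM (Fin.succAbove j) (pushM (Fin.succAbove i) (Hmdl k)) :=
      Fintype.sum_prod_type _
    have hsplit : (∑ j : Fin (k + 3), ((-1 : ℝ) ^ (j : ℕ)) •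
          pushM (k := k + 1) (Fin.succAbove j) (Zmdl k)) =
        (∑ j : Fin (k + 3), ((-1 : ℝ) ^ (j : ℕ)) • pushM (Fin.succAbove j) (Smdl (k + 1)))
        - (∑ j : Fin (k + 3), ((-1 : ℝ) ^ (j : ℕ)) • pushM (Fin.succAbove j) (idM (k + 1)))
        - (∑ j : Fin (k + 3), ∑ i : Fin (k + 2), ((-1 : ℝ) ^ ((j : ℕ) + (i : ℕ))) •
            pushM (Fin.succAbove j) (pushM (Fin.succAbove i) (Hmdl k))) := by
      rw [← Finset.sum_sub_distrib, ← Finset.sum_sub_distrib]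
      refine Finset.sum_congr rfl fun j _ => ?_
      rw [Zmdl, map_sub, map_sub, smul_sub, smul_sub, hre j]
    rw [show Zmdl (k + 1) = Smdl (k + 2) - idM (k + 2) -
      ∑ j : Fin (k + 3), ((-1 : ℝ) ^ (j : ℕ)) • pushM (Fin.succAbove j) (Hmdl (k + 1)) from rfl]
    rw [map_sub, map_sub, hthird, bdryM_Smdl (m := k + 1), bdryM_idM (m := k + 1), hsplit,
      ← hprod, double_sum_zero, sub_zero]
    abel

lemma bdry_Hmdl (k : ℕ) : bdryM (k + 1) (k + 1) (Hmdl (k + 1)) = Zmdl k := by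
  rw [Hmdl_succ, bdryM_coneM, bdry_Zmdl, map_zero, sub_zero]

end AuxProof4
noncomputable section AuxProof5

open Finsupp

variable {X : Type} [TopologicalSpace X]

lemma symCh_single {n : ℕ} (σ : Sing n X) (r : ℝ) :
    symCh n (Finsupp.single σ r) = r • symSimplex σ := by
  simp [symCh]

lemma bdry_symSimplex {k : ℕ} (σ : Sing (k + 1) X) :
    bdry k (symSimplex σ) =
      ∑ j : Fin (k + 2), ((-1 : ℝ) ^ (j : ℕ)) •
        symSimplex (σ.comp (affMap (Fin.succAbove j))) := by
  rw [← evalM_Smdl σ, bdry_evalM, bdryM_Smdl, map_sum]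
  refine Finset.sum_congr rfl fun j _ => ?_
  rw [map_smul, evalM_pushM, evalM_Smdl]

lemma bdry_symCh {k : ℕ} (c : Chain (k + 1) X) :
    bdry k (symCh (k + 1) c) = symCh k (bdry k c) := by
  have h : (bdry k).comp (symCh (X := X) (k + 1)) = (symCh k).comp (bdry k) := by
    apply Finsupp.lhom_ext
    intro σ r
    simp only [LinearMap.comp_apply, symCh_single, map_smul, bdry_symSimplex]
    rw [bdry_apply, map_sum, Finset.smul_sum]
    refine Finset.sum_congr rfl fun j _ => ?_
    rw [face_single, map_smul, symCh_single, smul_comm]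
  exact DFunLike.congr_fun h c

lemma faceM_Smdl_eq {m : ℕ} (j : Fin (m + 2)) :
    faceM j (Smdl (m + 1)) =
      ((-1 : ℝ) ^ (j : ℕ)) • faceM (0 : Fin (m + 2)) (Smdl (m + 1)) := by
  rw [Smdl, map_smul, map_smul, faceM_SmdlRaw j, smul_comm]

lemma face_symSimplex {k : ℕ} (j : Fin (k + 2)) (σ : Sing (k + 1) X) :
    face j (symSimplex σ) = ((-1 : ℝ) ^ (j : ℕ)) • face (0 : Fin (k + 2)) (symSimplex σ) := by
  rw [← evalM_Smdl σ, face_evalM, face_evalM, faceM_Smdl_eq j, map_smul]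

lemma face_symCh {k : ℕ} (j : Fin (k + 2)) (c : Chain (k + 1) X) :
    face j (symCh (k + 1) c) = ((-1 : ℝ) ^ (j : ℕ)) • face (0 : Fin (k + 2)) (symCh (k + 1) c) := by
  have h : (face j).comp (symCh (X := X) (k + 1)) =
      ((-1 : ℝ) ^ (j : ℕ)) • ((face (0 : Fin (k + 2))).comp (symCh (X := X) (k + 1))) := by
    apply Finsupp.lhom_ext
    intro σ r
    simp only [LinearMap.comp_apply, LinearMap.smul_apply, symCh_single, map_smul,
      face_symSimplex j]
    rw [smul_comm]
  exact DFunLike.congr_fun h c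

/-- The chain homotopy between symmetrisation and the identity on `X`. -/
def Hmap (k : ℕ) : Chain k X →ₗ[ℝ] Chain (k + 1) X :=
  Finsupp.lsum ℝ fun σ => LinearMap.toSpanSingleton ℝ _ (evalM σ (k + 1) (Hmdl k))

lemma Hmap_single {k : ℕ} (σ : Sing k X) (r : ℝ) :
    Hmap k (Finsupp.single σ r) = r • evalM σ (k + 1) (Hmdl k) := by
  simp [Hmap]

lemma bdry_Hmap {k : ℕ} (c : Chain (k + 1) X) :
    bdry (k + 1) (Hmap (k + 1) c) = symCh (k + 1) c - c - Hmap k (bdry k c) := by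
  have h : (bdry (k + 1)).comp (Hmap (X := X) (k + 1)) =
      symCh (X := X) (k + 1) - LinearMap.id - (Hmap k).comp (bdry k) := by
    apply Finsupp.lhom_ext
    intro σ r
    simp only [LinearMap.comp_apply, LinearMap.sub_apply, LinearMap.id_apply, Hmap_single,
      map_smul, symCh_single]
    rw [bdry_evalM, bdry_Hmdl]
    rw [show Zmdl k = Smdl (k + 1) - idM (k + 1) -
      ∑ j : Fin (k + 2), ((-1 : ℝ) ^ (j : ℕ)) • pushM (Fin.succAbove j) (Hmdl k) from rfl]
    rw [map_sub, map_sub, evalM_Smdl, evalM_idM, map_sum]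
    rw [bdry_apply, map_sum]
    rw [smul_sub, smul_sub, Finset.smul_sum]
    congr 1
    · congr 1
      rw [Finsupp.smul_single_one]
    · refine Finset.sum_congr rfl fun j _ => ?_
      rw [map_smul, evalM_pushM, face_single, map_smul, Hmap_single, smul_comm]
  exact DFunLike.congr_fun h c

lemma l1_eq_sum {n : ℕ} (c : Chain n X) (s : Finset (Sing n X)) (hs : c.support ⊆ s) :
    l1 c = ∑ σ ∈ s, |c σ| := by
  rw [l1]
  exact Finset.sum_subset hs fun σ _ hσ => by
    simp [Finsupp.notMem_support_iff.mp hσ]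

lemma l1_add_le {n : ℕ} (a b : Chain n X) : l1 (a + b) ≤ l1 a + l1 b := by
  classical
  rw [l1_eq_sum (a + b) (a.support ∪ b.support) Finsupp.support_add,
    l1_eq_sum a (a.support ∪ b.support) Finset.subset_union_left,
    l1_eq_sum b (a.support ∪ b.support) Finset.subset_union_right,
    ← Finset.sum_add_distrib]
  refine Finset.sum_le_sum fun σ _ => ?_
  rw [Finsupp.add_apply]
  exact abs_add_le _ _

lemma l1_smul {n : ℕ} (r : ℝ) (c : Chain n X) : l1 (r • c) = |r| * l1 c := by
  rw [l1_eq_sum (r • c) c.support (Finsupp.support_smul), l1, Finset.mul_sum]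
  refine Finset.sum_congr rfl fun σ _ => ?_
  rw [Finsupp.smul_apply, smul_eq_mul, abs_mul]

lemma l1_sum_le {n : ℕ} {α : Type*} (s : Finset α) (f : α → Chain n X) :
    l1 (∑ a ∈ s, f a) ≤ ∑ a ∈ s, l1 (f a) := by
  induction s using Finset.cons_induction with
  | empty => simp [l1]
  | cons a s ha ih =>
    rw [Finset.sum_cons, Finset.sum_cons]
    exact le_trans (l1_add_le _ _) (add_le_add le_rfl ih)

lemma l1_single_le {n : ℕ} (σ : Sing n X) (r : ℝ) : l1 (Finsupp.single σ r) ≤ |r| := by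
  by_cases h : r = 0
  · simp [h, l1]
  · rw [l1, Finsupp.support_single_ne_zero _ h]
    simp

lemma l1_symSimplex_le {n : ℕ} (σ : Sing n X) : l1 (symSimplex σ) ≤ 1 := by
  rw [symSimplex, l1_smul]
  have h1 : l1 (∑ π : Equiv.Perm (Fin (n + 1)),
      ((Equiv.Perm.sign π : ℤ) : ℝ) • Finsupp.single (σ.comp (affMap π)) (1 : ℝ)) ≤
      ((n + 1).factorial : ℝ) := by
    refine le_trans (l1_sum_le _ _) ?_
    have hterm : ∀ π : Equiv.Perm (Fin (n + 1)),
        l1 (((Equiv.Perm.sign π : ℤ) : ℝ) • Finsupp.single (σ.comp (affMap π)) (1 : ℝ)) ≤ 1 := by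
      intro π
      rw [l1_smul]
      have habs : |((Equiv.Perm.sign π : ℤ) : ℝ)| = 1 := by
        rcases Int.units_eq_one_or (Equiv.Perm.sign π) with h | h <;> simp [h]
      rw [habs, one_mul]
      simpa using l1_single_le (σ.comp (affMap π)) (1 : ℝ)
    refine le_trans (Finset.sum_le_sum fun π _ => hterm π) ?_
    rw [Finset.sum_const, Finset.card_univ, Fintype.card_perm, Fintype.card_fin, nsmul_eq_mul,
      mul_one]
  have habs : |(((n + 1).factorial : ℝ))⁻¹| = (((n + 1).factorial : ℝ))⁻¹ :=
    abs_of_nonneg (by positivity)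
  rw [habs]
  calc (((n + 1).factorial : ℝ))⁻¹ * l1 (∑ π : Equiv.Perm (Fin (n + 1)),
        ((Equiv.Perm.sign π : ℤ) : ℝ) • Finsupp.single (σ.comp (affMap π)) (1 : ℝ))
      ≤ (((n + 1).factorial : ℝ))⁻¹ * ((n + 1).factorial : ℝ) :=
        mul_le_mul_of_nonneg_left h1 (by positivity)
    _ = 1 := inv_mul_cancel₀ (by positivity)

lemma l1_symCh_le {n : ℕ} (c : Chain n X) : l1 (symCh n c) ≤ l1 c := by
  have hrep : symCh n c = ∑ σ ∈ c.support, (c σ) • symSimplex σ := by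
    rw [symCh, Finsupp.lsum_apply]
    rfl
  rw [hrep, l1]
  refine le_trans (l1_sum_le _ _) (Finset.sum_le_sum fun σ _ => ?_)
  rw [l1_smul]
  calc |c σ| * l1 (symSimplex σ) ≤ |c σ| * 1 :=
        mul_le_mul_of_nonneg_left (l1_symSimplex_le σ) (abs_nonneg _)
    _ = |c σ| := mul_one _

end AuxProof5

/-- For every cycle `c` there is a normalised cycle `c'` in the same homology class
with `‖c'‖₁ ≤ ‖c‖₁`. -/
theorem exists_normalised_representative (X : Type) [TopologicalSpace X] (n : ℕ)
    (c : Chain n X) (hc : c ∈ cyc X n) :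
    ∃ c' : Chain n X, c' ∈ cyc X n ∧ IsNormalised c' ∧ c' - c ∈ bdries X n ∧ l1 c' ≤ l1 c := by
  cases n with
  | zero =>
    exact ⟨c, hc, trivial, by rw [sub_self]; exact Submodule.zero_mem _, le_rfl⟩
  | succ k =>
    have hcyc : bdry k c = 0 := hc
    refine ⟨symCh (k + 1) c, ?_, ?_, ?_, l1_symCh_le c⟩
    · show symCh (k + 1) c ∈ LinearMap.ker (bdry k)
      rw [LinearMap.mem_ker, bdry_symCh, hcyc, map_zero]
    · have hface0 : face (0 : Fin (k + 2)) (symCh (k + 1) c) = 0 := by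
        have hsum : bdry k (symCh (k + 1) c) =
            ((k + 2 : ℕ) : ℝ) • face (0 : Fin (k + 2)) (symCh (k + 1) c) := by
          rw [bdry_apply]
          have hterm : ∀ j : Fin (k + 2), ((-1 : ℝ) ^ (j : ℕ)) • face j (symCh (k + 1) c) =
              face (0 : Fin (k + 2)) (symCh (k + 1) c) := by
            intro j
            rw [face_symCh j, smul_smul, ← pow_add, Even.neg_one_pow ⟨(j : ℕ), rfl⟩, one_smul]
          rw [Finset.sum_congr rfl fun j _ => hterm j, Finset.sum_const, Finset.card_univ,
            Fintype.card_fin, ← Nat.cast_smul_eq_nsmul ℝ]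
        have hz : bdry k (symCh (k + 1) c) = 0 := by rw [bdry_symCh, hcyc, map_zero]
        rw [hz] at hsum
        exact ((smul_eq_zero.mp hsum.symm).resolve_left (by positivity))
      show ∀ j : Fin (k + 2), j ≠ Fin.last (k + 1) → face j (symCh (k + 1) c) = 0
      intro j _
      rw [face_symCh j, hface0, smul_zero]
    · show symCh (k + 1) c - c ∈ LinearMap.range (bdry (k + 1))
      refine ⟨Hmap (k + 1) c, ?_⟩
      rw [bdry_Hmap, hcyc, map_zero, sub_zero]
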